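/- Let s ≥ 2 and k ≥ 1 be integers, and let B be a nonempty set of k-blocks, B ⊆ (Fin k → Fin s), with cardinality j = card B. Then the set E = { x ∈ ℝ : ∃ a : ℕ → Fin s, (∀ m, (fun i => a (k·m + i)) ∈ B) ∧ x = ∑_{n=0}^∞ (a n : ℝ) / s^{n+1} } of all numbers in [0,1] admitting an s-adic expansion all of whose consecutive k-digit blocks lie in B has Hausdorff dimension dimH E = (log j) / (k · log s). (The self-similar fractal dimension result used in the paper's Lemma 8.) -/

import Mathlib

open scoped ENNReal
open Filter MeasureTheory Set

namespace Stmt7Aux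

/-- numeral built from the first `n` digits -/
def pnum (s : ℕ) (a : ℕ → Fin s) : ℕ → ℕ
  | 0 => 0
  | n+1 => s * pnum s a n + (a n : ℕ)

noncomputable def sval (s : ℕ) (a : ℕ → Fin s) : ℝ := ∑' n, ((a n : ℕ) : ℝ) / (s:ℝ)^(n+1)

variable {s : ℕ}

theorem summable_aux (hs : 2 ≤ s) (a : ℕ → Fin s) :
    Summable (fun n => ((a n : ℕ) : ℝ) / (s:ℝ)^(n+1)) := by
  have hs0 : (0:ℝ) < s := by positivity
  have hlt : (1:ℝ)/s < 1 := by
    rw [div_lt_one hs0]; exact_mod_cast lt_of_lt_of_le one_lt_two hs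
  refine Summable.of_nonneg_of_le (fun n => by positivity) (fun n => ?_)
    (summable_geometric_of_lt_one (by positivity) hlt)
  have h1 : ((a n : ℕ) : ℝ) ≤ s := by exact_mod_cast (a n).2.le
  calc ((a n : ℕ) : ℝ) / (s:ℝ)^(n+1) ≤ (s:ℝ) / (s:ℝ)^(n+1) :=
        div_le_div_of_nonneg_right h1 (by positivity) |>.trans_eq rfl
    _ = (1/s)^n := by rw [div_pow, one_pow, pow_succ]; field_simp

theorem sval_nonneg (a : ℕ → Fin s) : 0 ≤ sval s a :=
  tsum_nonneg (fun n => by positivity)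

theorem sval_le_one (hs : 2 ≤ s) (a : ℕ → Fin s) : sval s a ≤ 1 := by
  have hs0 : (0:ℝ) < s := by positivity
  have hs1 : (1:ℝ) < s := by exact_mod_cast lt_of_lt_of_le one_lt_two hs
  have hlt : (1:ℝ)/s < 1 := by rw [div_lt_one hs0]; exact hs1
  have hsumg : Summable (fun n : ℕ => ((s:ℝ)-1)/s * (1/s)^n) :=
    (summable_geometric_of_lt_one (by positivity) hlt).mul_left _
  have hle : sval s a ≤ ∑' n : ℕ, ((s:ℝ)-1)/s * (1/s)^n := by
    refine Summable.tsum_le_tsum (fun n => ?_) (summable_aux hs a) hsumg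
    have h1 : ((a n : ℕ) : ℝ) ≤ (s:ℝ) - 1 := by
      have := (a n).2
      have : (a n : ℕ) + 1 ≤ s := this
      have : ((a n : ℕ) : ℝ) + 1 ≤ s := by exact_mod_cast this
      linarith
    calc ((a n : ℕ) : ℝ) / (s:ℝ)^(n+1) ≤ ((s:ℝ)-1) / (s:ℝ)^(n+1) :=
          div_le_div_of_nonneg_right h1 (by positivity) |>.trans_eq rfl
      _ = ((s:ℝ)-1)/s * (1/s)^n := by
          rw [div_pow, one_pow, pow_succ, div_mul_eq_mul_div, mul_one_div, div_div]
  refine hle.trans ?_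
  rw [tsum_mul_left, tsum_geometric_of_lt_one (by positivity) hlt]
  have hne : (s:ℝ) - 1 ≠ 0 := by linarith
  rw [one_sub_div hs0.ne', inv_div]
  rw [div_mul_div_comm]
  exact le_of_eq (by rw [mul_comm ((s:ℝ)-1) (s:ℝ)]; exact div_self (by nlinarith))

theorem partial_eq (hs : 2 ≤ s) (a : ℕ → Fin s) (n : ℕ) :
    ∑ m ∈ Finset.range n, ((a m : ℕ) : ℝ) / (s:ℝ)^(m+1) = (pnum s a n : ℝ) / (s:ℝ)^n := by
  have hs0 : (0:ℝ) < s := by positivity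
  induction n with
  | zero => simp [pnum]
  | succ n ih =>
    rw [Finset.sum_range_succ, ih]
    show _ = ((pnum s a (n+1) : ℕ) : ℝ) / _
    rw [pnum]
    push_cast
    field_simp
    ring

theorem partial_le_sval (hs : 2 ≤ s) (a : ℕ → Fin s) (n : ℕ) :
    (pnum s a n : ℝ) / (s:ℝ)^n ≤ sval s a ∧
      sval s a ≤ (pnum s a n : ℝ) / (s:ℝ)^n + ((s:ℝ)^n)⁻¹ := by
  have hs0 : (0:ℝ) < s := by positivity
  have hsum := summable_aux hs a
  have key := Summable.sum_add_tsum_nat_add (f := fun m => ((a m : ℕ) : ℝ) / (s:ℝ)^(m+1)) n hsum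
  rw [partial_eq hs a n] at key
  have htail : (∑' m, ((a (m + n) : ℕ) : ℝ) / (s:ℝ)^(m + n + 1))
      = ((s:ℝ)^n)⁻¹ * sval s (fun m => a (m + n)) := by
    rw [sval, ← tsum_mul_left]
    refine tsum_congr (fun m => ?_)
    rw [show m + n + 1 = n + (m+1) by ring, pow_add]
    field_simp
  rw [htail] at key
  have key' : (pnum s a n : ℝ) / (s:ℝ)^n + ((s:ℝ)^n)⁻¹ * sval s (fun m => a (m + n))
      = sval s a := key.trans rfl
  have hB0 : 0 ≤ ((s:ℝ)^n)⁻¹ * sval s (fun m => a (m + n)) :=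
    mul_nonneg (by positivity) (sval_nonneg _)
  have hB1 : ((s:ℝ)^n)⁻¹ * sval s (fun m => a (m + n)) ≤ ((s:ℝ)^n)⁻¹ :=
    mul_le_of_le_one_right (by positivity) (sval_le_one hs _)
  constructor
  · linarith
  · linarith

theorem pnum_congr {a a' : ℕ → Fin s} {n : ℕ} (h : ∀ m < n, a m = a' m) :
    pnum s a n = pnum s a' n := by
  induction n with
  | zero => rfl
  | succ n ih =>
    rw [pnum, pnum, ih (fun m hm => h m (hm.trans n.lt_succ_self)),
      h n n.lt_succ_self]

theorem pnum_inj (hs : 2 ≤ s) {a a' : ℕ → Fin s} {n : ℕ}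
    (h : pnum s a n = pnum s a' n) : ∀ m < n, a m = a' m := by
  induction n with
  | zero => intro m hm; omega
  | succ n ih =>
    rw [pnum, pnum] at h
    have hv : (a n : ℕ) = (a' n : ℕ) := by
      have h1 : (s * pnum s a n + (a n : ℕ)) % s = (a n : ℕ) % s := Nat.mul_add_mod _ _ _
      have h2 : (s * pnum s a' n + (a' n : ℕ)) % s = (a' n : ℕ) % s := Nat.mul_add_mod _ _ _
      rw [Nat.mod_eq_of_lt (a n).2] at h1
      rw [Nat.mod_eq_of_lt (a' n).2] at h2
      rw [h] at h1
      exact h1.symm.trans h2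
    have hp : pnum s a n = pnum s a' n := by
      have hs0 : s ≠ 0 := by omega
      have : s * pnum s a n = s * pnum s a' n := by omega
      exact Nat.eq_of_mul_eq_mul_left (by omega) this
    intro m hm
    rcases Nat.lt_succ_iff_lt_or_eq.1 hm with hm' | rfl
    · exact ih hp m hm'
    · exact Fin.ext hv

end Stmt7Aux

namespace Stmt7Aux2
open Filter MeasureTheory Set Topology
open scoped ENNReal NNReal

/-- block digit sequence from a sequence of block indices -/
def dig {s k j : ℕ} (hk : 0 < k) (e : Fin j → Fin k → Fin s) (ω : ℕ → Fin j) : ℕ → Fin s :=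
  fun m => e (ω (m / k)) ⟨m % k, Nat.mod_lt m hk⟩

theorem dig_block {s k j : ℕ} (hk : 0 < k) (e : Fin j → Fin k → Fin s) (ω : ℕ → Fin j)
    (m : ℕ) (i : Fin k) : dig hk e ω (k * m + i) = e (ω m) i := by
  unfold dig
  congr 1
  · rw [Nat.mul_add_div hk, Nat.div_eq_of_lt i.2, add_zero]
  · apply Fin.ext
    show (k * m + (i : ℕ)) % k = (i : ℕ)
    rw [Nat.mul_add_mod, Nat.mod_eq_of_lt i.2]

theorem dig_congr {s k j : ℕ} (hk : 0 < k) (e : Fin j → Fin k → Fin s) {ω ω' : ℕ → Fin j}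
    {n m : ℕ} (h : ∀ q < n, ω q = ω' q) (hm : m < k * n) :
    dig hk e ω m = dig hk e ω' m := by
  unfold dig
  rw [h (m / k) (by rw [Nat.div_lt_iff_lt_mul hk, Nat.mul_comm n k]; exact hm)]

/-- j-adic digits of a real number -/
noncomputable def om (j : ℕ) (hj : 0 < j) (x : ℝ) : ℕ → Fin j :=
  fun q => ⟨(⌊x * (j:ℝ)^(q+1)⌋).toNat % j, Nat.mod_lt _ hj⟩

theorem om_rec (j : ℕ) (hj : 0 < j) {x : ℝ} (hx : 0 ≤ x) (q : ℕ) :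
    ⌊x * (j:ℝ)^(q+1)⌋ = j * ⌊x * (j:ℝ)^q⌋ + ((om j hj x q : ℕ) : ℤ) := by
  have hj0 : (0:ℝ) < j := by exact_mod_cast hj
  set F := ⌊x * (j:ℝ)^q⌋ with hF
  set G := ⌊x * (j:ℝ)^(q+1)⌋ with hG
  have h1 : (j:ℤ) * F ≤ G := by
    rw [hG]
    apply Int.le_floor.2
    push_cast
    calc (j:ℝ) * F ≤ j * (x * (j:ℝ)^q) :=
          mul_le_mul_of_nonneg_left (Int.floor_le _) hj0.le
      _ = x * (j:ℝ)^(q+1) := by ring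
  have h2 : G < j * F + j := by
    rw [hG]
    apply Int.floor_lt.2
    push_cast
    calc x * (j:ℝ)^(q+1) = j * (x * (j:ℝ)^q) := by ring
      _ < j * (F + 1) :=
          (mul_lt_mul_iff_right₀ hj0).2 (Int.lt_floor_add_one _)
      _ = j * F + j := by ring
  have h3 : (0:ℤ) ≤ G := Int.floor_nonneg.2 (by positivity)
  have hom : ((om j hj x q : ℕ) : ℤ) = G % j := by
    show ((G.toNat % j : ℕ) : ℤ) = G % j
    push_cast [Int.toNat_of_nonneg h3]
    rfl
  have hGr : G % (j:ℤ) = G - j * F := by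
    have hr0 : (0:ℤ) ≤ G - j * F := by omega
    have hrj : G - j * F < j := by omega
    calc G % (j:ℤ) = (G - j * F + j * F) % j := by ring_nf
      _ = (G - j * F) % j := by rw [Int.add_mul_emod_self_left]
      _ = G - j * F := Int.emod_eq_of_lt hr0 hrj
  omega

theorem floor_eq_pnum (j : ℕ) (hj : 0 < j) {x : ℝ} (hx : x ∈ Set.Ico (0:ℝ) 1) (n : ℕ) :
    ⌊x * (j:ℝ)^n⌋ = (Stmt7Aux.pnum j (om j hj x) n : ℤ) := by
  induction n with
  | zero =>
    simp only [pow_zero, mul_one, Stmt7Aux.pnum]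
    exact_mod_cast Int.floor_eq_zero_iff.2 (by exact_mod_cast hx)
  | succ n ih =>
    rw [om_rec j hj hx.1 n, ih]
    show _ = ((j * Stmt7Aux.pnum j (om j hj x) n + ((om j hj x n : ℕ)) : ℕ) : ℤ)
    push_cast
    ring

theorem mem_Ico_of_floor {j n Q : ℕ} (hj : 0 < j) {x : ℝ} (hx : x ∈ Set.Ico (0:ℝ) 1)
    (h : ⌊x * (j:ℝ)^n⌋ = (Q : ℤ)) :
    x ∈ Set.Ico ((Q:ℝ) / (j:ℝ)^n) (((Q:ℝ) + 1) / (j:ℝ)^n) := by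
  have hj0 : (0:ℝ) < (j:ℝ)^n := by positivity
  have h1 : ((Q:ℝ)) ≤ x * (j:ℝ)^n := by exact_mod_cast h ▸ Int.floor_le (x * (j:ℝ)^n) |>.trans_eq' (by push_cast; rfl)
  have h2 : x * (j:ℝ)^n < (Q:ℝ) + 1 := by
    have := Int.lt_floor_add_one (x * (j:ℝ)^n)
    rw [h] at this
    exact_mod_cast this
  constructor
  · rw [div_le_iff₀ hj0]; linarith
  · rw [lt_div_iff₀ hj0]; linarith


theorem rpow_pow {ρ : ℝ} (hρ : 0 ≤ ρ) (d : ℝ) (n : ℕ) : (ρ^n) ^ d = (ρ ^ d)^n := by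
  calc (ρ^n)^d = (ρ^((n:ℝ)))^d := by rw [Real.rpow_natCast]
    _ = ρ^((n:ℝ)*d) := (Real.rpow_mul hρ _ _).symm
    _ = ρ^(d*(n:ℝ)) := by rw [mul_comm]
    _ = (ρ^d)^((n:ℝ)) := Real.rpow_mul hρ _ _
    _ = (ρ^d)^n := Real.rpow_natCast _ n

theorem dimH_le_aux (s k j : ℕ) (hs : 2 ≤ s) (hk : 0 < k) (hj : 0 < j)
    (e : Fin j → Fin k → Fin s) (E : Set ℝ)
    (hE : ∀ x ∈ E, ∃ ω : ℕ → Fin j, x = Stmt7Aux.sval s (dig hk e ω))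
    (d₀ : ℝ≥0) (hρd : (((s:ℝ)^k)⁻¹) ^ (d₀:ℝ) = (j:ℝ)⁻¹) :
    dimH E ≤ (d₀ : ℝ≥0∞) := by
  classical
  have hs1 : (1:ℝ) < s := by exact_mod_cast lt_of_lt_of_le one_lt_two hs
  set ρ : ℝ := ((s:ℝ)^k)⁻¹ with hρdef
  have hρ0 : 0 < ρ := by positivity
  have hρ1 : ρ < 1 := by
    rw [hρdef, inv_lt_one_iff₀]
    right
    exact one_lt_pow₀ hs1 hk.ne'
  have hρn : ∀ n : ℕ, ρ^n = ((s:ℝ)^(k*n))⁻¹ := fun n => by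
    rw [hρdef, inv_pow, ← pow_mul]
  set ext : ∀ n : ℕ, (Fin n → Fin j) → (ℕ → Fin j) :=
    fun n w m => if h : m < n then w ⟨m, h⟩ else ⟨0, hj⟩ with hext
  set c : ∀ n : ℕ, (Fin n → Fin j) → ℝ :=
    fun n w => (Stmt7Aux.pnum s (dig hk e (ext n w)) (k*n) : ℝ)/(s:ℝ)^(k*n) with hc
  set t : ∀ n : ℕ, (Fin n → Fin j) → Set ℝ :=
    fun n w => Icc (c n w) (c n w + ρ^n) with htdef
  have hdiam : ∀ n w, EMetric.diam (t n w) = ENNReal.ofReal (ρ^n) := by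
    intro n w
    rw [htdef]
    exact (Real.ediam_Icc _ _).trans (by rw [add_sub_cancel_left])
  have hmeas : μH[(d₀:ℝ)] E ≤ 1 := by
    have hr : Tendsto (fun n : ℕ => ENNReal.ofReal (ρ^n)) atTop (𝓝 0) := by
      have := ENNReal.tendsto_ofReal
        (tendsto_pow_atTop_nhds_zero_of_lt_one hρ0.le hρ1)
      simpa using this
    have ht : ∀ᶠ n in atTop, ∀ w : Fin n → Fin j,
        EMetric.diam (t n w) ≤ ENNReal.ofReal (ρ^n) :=
      Eventually.of_forall fun n w => le_of_eq (hdiam n w)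
    have hst : ∀ᶠ n in atTop, E ⊆ ⋃ w : Fin n → Fin j, t n w := by
      refine Eventually.of_forall fun n => fun x hx => ?_
      obtain ⟨ω, rfl⟩ := hE x hx
      refine mem_iUnion.2 ⟨fun i : Fin n => ω i, ?_⟩
      have hagree : ∀ q < n, (ext n (fun i : Fin n => ω i)) q = ω q := by
        intro q hq
        simp only [hext, dif_pos hq]
      have hpn : Stmt7Aux.pnum s (dig hk e (ext n (fun i : Fin n => ω i))) (k*n)
          = Stmt7Aux.pnum s (dig hk e ω) (k*n) :=
        Stmt7Aux.pnum_congr (fun m hm => dig_congr hk e hagree hm)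
      have hb := Stmt7Aux.partial_le_sval hs (dig hk e ω) (k*n)
      rw [htdef]
      constructor
      · rw [hc]
        simp only [hpn]
        exact hb.1
      · rw [hc]
        simp only [hpn]
        rw [hρn n]
        exact hb.2
    calc μH[(d₀:ℝ)] E ≤ liminf (fun n : ℕ =>
          ∑ w : Fin n → Fin j, EMetric.diam (t n w) ^ (d₀:ℝ)) atTop :=
        Measure.hausdorffMeasure_le_liminf_sum (d₀:ℝ) E _ hr t ht hst
      _ ≤ 1 := by
        have hsum : ∀ n : ℕ, (∑ w : Fin n → Fin j, EMetric.diam (t n w) ^ (d₀:ℝ)) = 1 := by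
          intro n
          have h1 : ∀ w : Fin n → Fin j, EMetric.diam (t n w) ^ (d₀:ℝ)
              = ENNReal.ofReal (((j:ℝ)⁻¹)^n) := by
            intro w
            rw [hdiam n w, ENNReal.ofReal_rpow_of_pos (pow_pos hρ0 n),
              rpow_pow hρ0.le, hρd]
          simp only [h1, Finset.sum_const, Finset.card_univ, nsmul_eq_mul]
          have hcard : Fintype.card (Fin n → Fin j) = j^n := by
            simp [Fintype.card_fun]
          rw [hcard]
          have hj0 : ((j:ℝ)) ≠ 0 := by positivity
          rw [show ((j^n : ℕ) : ℝ≥0∞) = ENNReal.ofReal ((j:ℝ)^n) by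
            rw [ENNReal.ofReal_pow (by positivity), ENNReal.ofReal_natCast, Nat.cast_pow]]
          rw [← ENNReal.ofReal_mul (by positivity), ← mul_pow,
            mul_inv_cancel₀ hj0, one_pow, ENNReal.ofReal_one]
        simp only [hsum]
        rw [liminf_const]
  exact dimH_le_of_hausdorffMeasure_ne_top (ne_top_of_le_ne_top ENNReal.one_ne_top hmeas)

theorem le_dimH_aux (s k j : ℕ) (hs : 2 ≤ s) (hk : 0 < k) (hj : 0 < j)
    (e : Fin j → Fin k → Fin s) (he : Function.Injective e) (E : Set ℝ)
    (hE : ∀ ω : ℕ → Fin j, Stmt7Aux.sval s (dig hk e ω) ∈ E)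
    (d₀ : ℝ≥0) (hρd : (((s:ℝ)^k)⁻¹) ^ (d₀:ℝ) = (j:ℝ)⁻¹) :
    (d₀ : ℝ≥0∞) ≤ dimH E := by
  classical
  have hs1 : (1:ℝ) < s := by exact_mod_cast lt_of_lt_of_le one_lt_two hs
  set ρ : ℝ := ((s:ℝ)^k)⁻¹ with hρdef
  have hρ0 : 0 < ρ := by positivity
  have hρ1 : ρ < 1 := by
    rw [hρdef, inv_lt_one_iff₀]
    right
    exact one_lt_pow₀ hs1 hk.ne'
  have hρn : ∀ n : ℕ, ρ^n = ((s:ℝ)^(k*n))⁻¹ := fun n => by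
    rw [hρdef, inv_pow, ← pow_mul]
  set d : ℝ := (d₀ : ℝ) with hd
  have hd0 : 0 ≤ d := d₀.2
  set g : ℝ → ℝ := fun x => Stmt7Aux.sval s (dig hk e (om j hj x)) with hg
  have hom_meas : ∀ q : ℕ, Measurable (fun x : ℝ => om j hj x q) := by
    intro q
    have heq : (fun x : ℝ => om j hj x q)
        = (fun z : ℤ => (⟨z.toNat % j, Nat.mod_lt _ hj⟩ : Fin j))
          ∘ (fun x : ℝ => ⌊x * (j:ℝ)^(q+1)⌋) := rfl
    rw [heq]
    exact measurable_from_top.comp (Int.measurable_floor.comp (measurable_id.mul_const _))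
  have hgm : Measurable g := by
    have hterm : ∀ m : ℕ,
        Measurable (fun x : ℝ => ((dig hk e (om j hj x) m : ℕ) : ℝ) / (s:ℝ)^(m+1)) := by
      intro m
      have heq : (fun x : ℝ => ((dig hk e (om j hj x) m : ℕ) : ℝ))
          = (fun v : Fin j => ((e v ⟨m % k, Nat.mod_lt m hk⟩ : ℕ) : ℝ))
            ∘ (fun x => om j hj x (m / k)) := rfl
      have : Measurable (fun x : ℝ => ((dig hk e (om j hj x) m : ℕ) : ℝ)) := by
        rw [heq]; exact measurable_from_top.comp (hom_meas (m/k))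
      exact this.div_const _
    apply measurable_of_tendsto_metrizable
      (f := fun N x => ∑ m ∈ Finset.range N, ((dig hk e (om j hj x) m : ℕ) : ℝ)/(s:ℝ)^(m+1))
      (fun N => Finset.measurable_sum _ (fun m _ => hterm m))
    rw [tendsto_pi_nhds]
    intro x
    exact (Stmt7Aux.summable_aux hs _).hasSum.tendsto_sum_nat
  set ν : Measure ℝ := Measure.map g (volume.restrict (Ico (0:ℝ) 1)) with hν
  -- Claim A : cylinder-size sets have small measure
  have claimA : ∀ (n : ℕ) (U : Set ℝ), MeasurableSet U →
      EMetric.diam U ≤ ENNReal.ofReal (ρ^n) →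
      ν U ≤ 7 * ENNReal.ofReal (((j:ℝ)⁻¹)^n) := by
    intro n U hU hdiam
    rw [hν, Measure.map_apply hgm hU, Measure.restrict_apply (hgm hU)]
    set S : Set ℝ := g ⁻¹' U ∩ Ico 0 1 with hS
    rcases S.eq_empty_or_nonempty with hSe | ⟨x₀, hx₀⟩
    · rw [hSe]; simp
    set M : ℝ → ℕ := fun x => Stmt7Aux.pnum s (dig hk e (om j hj x)) (k*n) with hM
    have hskn : (0:ℝ) < (s:ℝ)^(k*n) := by positivity
    have hcb : ∀ x : ℝ, (M x : ℝ)/(s:ℝ)^(k*n) ≤ g x ∧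
        g x ≤ (M x : ℝ)/(s:ℝ)^(k*n) + ρ^n := by
      intro x
      have h := Stmt7Aux.partial_le_sval hs (dig hk e (om j hj x)) (k*n)
      rw [hρn n]
      exact h
    have hMdiff : ∀ x ∈ S, ∀ x' ∈ S, M x ≤ M x' + 3 := by
      intro x hx x' hx'
      have hgd : dist (g x) (g x') ≤ ρ^n := by
        have h1 : edist (g x) (g x') ≤ EMetric.diam U :=
          EMetric.edist_le_diam_of_mem hx.1 hx'.1
        have h2 := h1.trans hdiam
        rw [edist_dist] at h2
        exact (ENNReal.ofReal_le_ofReal_iff (by positivity)).1 h2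
      have h3 := hcb x; have h4 := hcb x'
      have h5 : g x - g x' ≤ ρ^n := by
        rw [Real.dist_eq] at hgd
        have := abs_le.1 hgd
        linarith [this.2]
      have h6 : (M x : ℝ) / (s:ℝ)^(k*n) ≤ (M x' : ℝ)/(s:ℝ)^(k*n) + 3 * ρ^n := by
        linarith [h3.1, h4.2]
      have h7 : (M x : ℝ) ≤ (M x' : ℝ) + 3 := by
        have h8 := mul_le_mul_of_nonneg_right h6 hskn.le
        rw [hρn n] at h8
        rw [add_mul, div_mul_cancel₀ _ hskn.ne', div_mul_cancel₀ _ hskn.ne',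
          mul_assoc, inv_mul_cancel₀ hskn.ne', mul_one] at h8
        exact h8
      exact_mod_cast h7
    have hcyl : ∀ q : ℕ, volume {x | x ∈ Ico (0:ℝ) 1 ∧ M x = q}
        ≤ ENNReal.ofReal (((j:ℝ)⁻¹)^n) := by
      intro q
      rcases Set.eq_empty_or_nonempty {x | x ∈ Ico (0:ℝ) 1 ∧ M x = q} with hem | ⟨y, hy⟩
      · rw [hem]; simp
      set Q : ℕ := Stmt7Aux.pnum j (om j hj y) n with hQ
      have hsub : {x | x ∈ Ico (0:ℝ) 1 ∧ M x = q}
          ⊆ Ico ((Q:ℝ)/(j:ℝ)^n) (((Q:ℝ)+1)/(j:ℝ)^n) := by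
        intro x hx
        have hMeq : M x = M y := by rw [hx.2, hy.2]
        have hdig : ∀ m < k*n, dig hk e (om j hj x) m = dig hk e (om j hj y) m :=
          Stmt7Aux.pnum_inj hs hMeq
        have homeq : ∀ m' < n, om j hj x m' = om j hj y m' := by
          intro m' hm'
          apply he
          funext i
          have h1 : k*m' + (i:ℕ) < k*n := by
            calc k*m' + (i:ℕ) < k*m' + k := by omega
              _ = k*(m'+1) := by ring
              _ ≤ k*n := Nat.mul_le_mul_left k hm'
          have h2 := hdig (k*m' + i) h1
          rw [dig_block, dig_block] at h2
          exact h2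
        have hfl : ⌊x * (j:ℝ)^n⌋ = (Q:ℤ) := by
          rw [floor_eq_pnum j hj hx.1 n]
          exact_mod_cast (Stmt7Aux.pnum_congr homeq :
            Stmt7Aux.pnum j (om j hj x) n = Stmt7Aux.pnum j (om j hj y) n)
        exact mem_Ico_of_floor hj hx.1 hfl
      calc volume {x | x ∈ Ico (0:ℝ) 1 ∧ M x = q}
          ≤ volume (Ico ((Q:ℝ)/(j:ℝ)^n) (((Q:ℝ)+1)/(j:ℝ)^n)) := measure_mono hsub
        _ = ENNReal.ofReal (((j:ℝ)⁻¹)^n) := by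
            rw [Real.volume_Ico]
            congr 1
            have hjn : (0:ℝ) < (j:ℝ)^n := by positivity
            rw [inv_pow]
            field_simp
            ring
    have hcover : S ⊆ ⋃ q ∈ Finset.Icc (M x₀ - 3) (M x₀ + 3),
        {x | x ∈ Ico (0:ℝ) 1 ∧ M x = q} := by
      intro x hx
      refine mem_iUnion₂.2 ⟨M x, ?_, ⟨hx.2, rfl⟩⟩
      simp only [Finset.mem_Icc]
      have h1 := hMdiff x hx x₀ hx₀
      have h2 := hMdiff x₀ hx₀ x hx
      omega
    calc volume S
        ≤ volume (⋃ q ∈ Finset.Icc (M x₀ - 3) (M x₀ + 3),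
            {x | x ∈ Ico (0:ℝ) 1 ∧ M x = q}) := measure_mono hcover
      _ ≤ ∑ q ∈ Finset.Icc (M x₀ - 3) (M x₀ + 3),
            volume {x | x ∈ Ico (0:ℝ) 1 ∧ M x = q} := measure_biUnion_finset_le _ _
      _ ≤ ∑ _q ∈ Finset.Icc (M x₀ - 3) (M x₀ + 3),
            ENNReal.ofReal (((j:ℝ)⁻¹)^n) := Finset.sum_le_sum (fun q _ => hcyl q)
      _ = (Finset.Icc (M x₀ - 3) (M x₀ + 3)).card
            • ENNReal.ofReal (((j:ℝ)⁻¹)^n) := Finset.sum_const _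
      _ ≤ 7 * ENNReal.ofReal (((j:ℝ)⁻¹)^n) := by
          rw [nsmul_eq_mul]
          refine mul_le_mul_left ?_ _
          have hcard : (Finset.Icc (M x₀ - 3) (M x₀ + 3)).card ≤ 7 := by
            rw [Nat.card_Icc]; omega
          calc ((Finset.Icc (M x₀ - 3) (M x₀ + 3)).card : ℝ≥0∞)
              ≤ ((7:ℕ) : ℝ≥0∞) := by exact_mod_cast hcard
            _ = 7 := by norm_num
  -- handle d = 0 trivially
  by_cases hd0' : d = 0
  · have : d₀ = 0 := by ext; exact hd0'
    simp [this]
  have hdpos : 0 < d := lt_of_le_of_ne hd0 (Ne.symm hd0')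
  have hjinv1 : (j:ℝ)⁻¹ < 1 := by
    rw [← hρd]
    exact Real.rpow_lt_one hρ0.le hρ1 hdpos
  set C : ℝ≥0∞ := 7 * ENNReal.ofReal j with hC
  have hC0 : C ≠ 0 := by
    rw [hC]
    exact mul_ne_zero (by norm_num) (by
      simp only [ne_eq, ENNReal.ofReal_eq_zero, not_le]
      exact_mod_cast hj)
  have hCtop : C ≠ ⊤ := by
    rw [hC]
    exact ENNReal.mul_ne_top (by norm_num) ENNReal.ofReal_ne_top
  have key : ∀ U : Set ℝ, EMetric.diam U ≤ ENNReal.ofReal ρ →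
      (C⁻¹ • ν) U ≤ EMetric.diam U ^ d := by
    intro U hU
    have hν_le : ν U ≤ C * EMetric.diam U ^ d := by
      have hVd : EMetric.diam (closure U) = EMetric.diam U := EMetric.diam_closure U
      have hUV : ν U ≤ ν (closure U) := measure_mono subset_closure
      rcases eq_or_ne (EMetric.diam U) 0 with h0 | h0
      · have h1 : Tendsto (fun n : ℕ => ENNReal.ofReal (((j:ℝ)⁻¹)^n)) atTop (𝓝 0) := by
          simpa using ENNReal.tendsto_ofReal
            (tendsto_pow_atTop_nhds_zero_of_lt_one (by positivity) hjinv1)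
        have hlim : Tendsto (fun n : ℕ => 7 * ENNReal.ofReal (((j:ℝ)⁻¹)^n)) atTop (𝓝 0) := by
          simpa using ENNReal.Tendsto.const_mul h1 (Or.inr (by norm_num))
        have hb : ∀ n : ℕ, ν (closure U) ≤ 7 * ENNReal.ofReal (((j:ℝ)⁻¹)^n) := fun n =>
          claimA n (closure U) isClosed_closure.measurableSet
            (by rw [hVd, h0]; exact zero_le)
        have hz : ν U ≤ 0 := hUV.trans (ge_of_tendsto hlim (Eventually.of_forall hb))
        rw [h0, ENNReal.zero_rpow_of_pos hdpos, mul_zero]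
        exact hz
      · have hdne : EMetric.diam U ≠ ⊤ := (hU.trans_lt ENNReal.ofReal_lt_top).ne
        set δ : ℝ := (EMetric.diam U).toReal with hδ
        have hδ0 : 0 < δ := ENNReal.toReal_pos h0 hdne
        have hδeq : EMetric.diam U = ENNReal.ofReal δ := (ENNReal.ofReal_toReal hdne).symm
        have hδρ : δ ≤ ρ := ENNReal.toReal_le_of_le_ofReal hρ0.le hU
        have hex : ∃ m : ℕ, ρ^m < δ := by
          have h1 := tendsto_pow_atTop_nhds_zero_of_lt_one hρ0.le hρ1
          exact (h1.eventually (gt_mem_nhds hδ0)).exists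
        have hm₀ : ρ^(Nat.find hex) < δ := Nat.find_spec hex
        have hm₀0 : Nat.find hex ≠ 0 := by
          intro h
          rw [h, pow_zero] at hm₀
          linarith
        set n : ℕ := Nat.find hex - 1 with hn
        have hn1 : δ ≤ ρ^n := not_lt.1 (Nat.find_min hex (by omega))
        have hn2 : ρ^(n+1) < δ := by
          rw [show n+1 = Nat.find hex by omega]
          exact hm₀
        have hA := claimA n (closure U) isClosed_closure.measurableSet
          (by rw [hVd, hδeq]; exact ENNReal.ofReal_le_ofReal hn1)
        have hstep : ((j:ℝ)⁻¹)^n ≤ (j:ℝ) * δ^d := by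
          have hj0 : (0:ℝ) < j := by exact_mod_cast hj
          have h1 : ((j:ℝ)⁻¹)^n = (j:ℝ) * ((j:ℝ)⁻¹)^(n+1) := by
            rw [pow_succ]
            field_simp
          have h2 : ((j:ℝ)⁻¹)^(n+1) = (ρ^(n+1)) ^ d := by
            rw [rpow_pow hρ0.le, hρd]
          have h3 : (ρ^(n+1)) ^ d ≤ δ^d :=
            Real.rpow_le_rpow (by positivity) hn2.le hd0
          calc ((j:ℝ)⁻¹)^n = (j:ℝ) * ((j:ℝ)⁻¹)^(n+1) := h1
            _ = (j:ℝ) * (ρ^(n+1))^d := by rw [h2]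
            _ ≤ (j:ℝ) * δ^d := mul_le_mul_of_nonneg_left h3 hj0.le
        calc ν U ≤ ν (closure U) := hUV
          _ ≤ 7 * ENNReal.ofReal (((j:ℝ)⁻¹)^n) := hA
          _ ≤ 7 * ENNReal.ofReal ((j:ℝ) * δ^d) :=
              mul_le_mul_right (ENNReal.ofReal_le_ofReal hstep) _
          _ = C * ENNReal.ofReal (δ^d) := by
              rw [hC, ENNReal.ofReal_mul (by positivity), mul_assoc]
          _ = C * EMetric.diam U ^ d := by
              rw [hδeq, ENNReal.ofReal_rpow_of_pos hδ0]
    rw [Measure.smul_apply, smul_eq_mul]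
    calc C⁻¹ * ν U ≤ C⁻¹ * (C * EMetric.diam U ^ d) := mul_le_mul_right hν_le _
      _ = (C⁻¹ * C) * EMetric.diam U ^ d := by rw [← mul_assoc]
      _ = EMetric.diam U ^ d := by rw [ENNReal.inv_mul_cancel hC0 hCtop, one_mul]
  have hle : C⁻¹ • ν ≤ μH[d] :=
    Measure.le_hausdorffMeasure d _ (ENNReal.ofReal ρ) (ENNReal.ofReal_pos.2 hρ0) key
  have hνE : 1 ≤ ν E := by
    have h1 : (volume.restrict (Ico (0:ℝ) 1)) (g ⁻¹' E) ≤ ν E :=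
      Measure.le_map_apply hgm.aemeasurable E
    have h2 : g ⁻¹' E = univ := eq_univ_of_forall (fun x => hE _)
    rw [h2, Measure.restrict_apply_univ, Real.volume_Ico] at h1
    simpa using h1
  have hH : μH[d] E ≠ 0 := by
    intro h0
    have h1 : (C⁻¹ • ν) E ≤ μH[d] E := Measure.le_iff'.1 hle E
    rw [h0, Measure.smul_apply, smul_eq_mul] at h1
    have hCinv : C⁻¹ ≠ 0 := ENNReal.inv_ne_zero.2 hCtop
    have hνE0 : ν E ≠ 0 := by
      intro h
      rw [h] at hνE
      simp at hνE
    exact (mul_ne_zero hCinv hνE0) (le_antisymm h1 zero_le)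
  exact le_dimH_of_hausdorffMeasure_ne_zero hH

end Stmt7Aux2

open scoped ENNReal NNReal
open MeasureTheory Set

open Stmt7Aux Stmt7Aux2

/-- The self-similar fractal dimension result used in the paper's Lemma 8: the
set of numbers in `[0,1]` admitting an s-adic expansion all of whose consecutive
k-digit blocks lie in a nonempty set `B` of cardinality `j` has Hausdorff
dimension `(log j)/(k · log s)`. -/
theorem stmt_7 (s k : ℕ) (hs : 2 ≤ s) (hk : 1 ≤ k)
    (B : Finset (Fin k → Fin s)) (hB : B.Nonempty) (j : ℕ) (hj : j = B.card) :
    dimH {x : ℝ | ∃ a : ℕ → Fin s,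
        (∀ m : ℕ, (fun i : Fin k => a (k * m + i)) ∈ B) ∧
        x = ∑' n : ℕ, ((a n : ℕ) : ℝ) / (s : ℝ) ^ (n + 1)} =
      ENNReal.ofReal (Real.log j / (k * Real.log s)) := by
  classical
  have hk0 : 0 < k := hk
  have hj1 : 0 < j := by rw [hj]; exact Finset.card_pos.2 hB
  have hs1 : (1:ℝ) < s := by exact_mod_cast lt_of_lt_of_le one_lt_two hs
  set e : Fin j → (Fin k → Fin s) :=
    fun i => (B.equivFin.symm (Fin.cast hj i) : {x // x ∈ B}).1 with he
  have heB : ∀ i, e i ∈ B := fun i => (B.equivFin.symm (Fin.cast hj i)).2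
  have heinj : Function.Injective e := by
    intro i i' h
    have h1 : B.equivFin.symm (Fin.cast hj i) = B.equivFin.symm (Fin.cast hj i') :=
      Subtype.ext h
    have h2 := B.equivFin.symm.injective h1
    apply Fin.ext
    simpa using congrArg Fin.val h2
  set E : Set ℝ := {x : ℝ | ∃ a : ℕ → Fin s,
      (∀ m : ℕ, (fun i : Fin k => a (k * m + i)) ∈ B) ∧
      x = ∑' n : ℕ, ((a n : ℕ) : ℝ) / (s : ℝ) ^ (n + 1)} with hEdef
  set d : ℝ := Real.log j / (k * Real.log s) with hd
  have hlogs : 0 < Real.log s := Real.log_pos hs1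
  have hd0 : 0 ≤ d := div_nonneg (Real.log_natCast_nonneg j) (by positivity)
  set d₀ : ℝ≥0 := ⟨d, hd0⟩ with hd₀
  have hcoe : ENNReal.ofReal d = (d₀ : ℝ≥0∞) := by
    have h1 : d.toNNReal = d₀ := by
      ext
      rw [Real.coe_toNNReal']
      exact max_eq_left hd0
    rw [ENNReal.ofReal, h1]
  have hρd : (((s:ℝ)^k)⁻¹) ^ (d₀:ℝ) = (j:ℝ)⁻¹ := by
    have hsk : (0:ℝ) < (s:ℝ)^k := by positivity
    have h1 : ((s:ℝ)^k) ^ ((d₀:ℝ)) = (j:ℝ) := by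
      have hc : (d₀ : ℝ) = d := rfl
      rw [hc, Real.rpow_def_of_pos hsk, Real.log_pow]
      have h2 : (k:ℝ) * Real.log s * d = Real.log j := by
        rw [hd]
        field_simp
      rw [h2, Real.exp_log (by exact_mod_cast hj1)]
    rw [Real.inv_rpow hsk.le, h1]
  have hEup : ∀ x ∈ E, ∃ ω : ℕ → Fin j, x = sval s (dig hk0 e ω) := by
    rintro x ⟨a, ha, rfl⟩
    set ω : ℕ → Fin j := fun m =>
      Fin.cast hj.symm (B.equivFin ⟨fun i : Fin k => a (k*m+i), ha m⟩) with hω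
    have heω : ∀ m, e (ω m) = fun i : Fin k => a (k*m + i) := by
      intro m
      have hcast : Fin.cast hj (ω m)
          = B.equivFin ⟨fun i : Fin k => a (k*m+i), ha m⟩ := Fin.ext rfl
      show (B.equivFin.symm (Fin.cast hj (ω m)) : {x // x ∈ B}).1 = _
      rw [hcast, Equiv.symm_apply_apply]
    have hda : dig hk0 e ω = a := by
      funext m
      have h1 : dig hk0 e ω m = e (ω (m / k)) ⟨m % k, Nat.mod_lt m hk0⟩ := rfl
      rw [h1, heω]
      show a (k * (m/k) + m % k) = a m
      rw [Nat.div_add_mod]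
    exact ⟨ω, by rw [hda]; rfl⟩
  have hElow : ∀ ω : ℕ → Fin j, sval s (dig hk0 e ω) ∈ E := by
    intro ω
    refine ⟨dig hk0 e ω, fun m => ?_, rfl⟩
    have h1 : (fun i : Fin k => dig hk0 e ω (k*m + i)) = e (ω m) :=
      funext fun i => dig_block hk0 e ω m i
    rw [h1]
    exact heB (ω m)
  have hupper := dimH_le_aux s k j hs hk0 hj1 e E hEup d₀ hρd
  have hlower := le_dimH_aux s k j hs hk0 hj1 e heinj E hElow d₀ hρd
  rw [hcoe]
  exact le_antisymm hupper hlower
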